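/- arXiv:2004.08954 — 2 statements merged into one kernel-verified Lean document; each statement's English description precedes it below -/
import Mathlib

section
/- Let p ≥ 3 be a prime, s ≥ 1, n ≥ 0 integers, and b an integer with 0 ≤ b < p(n+1) and p | b. If (p−1)·p^{s(n+1)/2−1} > n+1, then M_{p,s,n}(b) > 0. -/
open Polynomial Finset

/-- The polynomial `T_{p,s,n}(q) = ∏_{j=0}^n ∏_{k=1}^{p-1} (1 - q^{pj+k})^s`. -/
noncomputable def borweinPoly (p s n : ℕ) : Polynomial ℤ :=
  ∏ j ∈ Finset.range (n + 1), ∏ k ∈ Finset.Icc 1 (p - 1),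
    (1 - Polynomial.X ^ (p * j + k)) ^ s

/-- The coefficient `t_{i,p,s}` of `q^i` in `T_{p,s,n}(q)`. -/
noncomputable def borweinCoeff (p s n i : ℕ) : ℤ := (borweinPoly p s n).coeff i

/-- The degree `d_{p,s,n} = p(p-1)s(n+1)^2/2` of `T_{p,s,n}`. -/
def borweinDeg (p s n : ℕ) : ℕ := p * (p - 1) * s * (n + 1) ^ 2 / 2

/-- `M_{p,s,n}(b) = ∑_{ℓ ≥ 0} t_{b + ℓ·p(n+1), p, s}`, a finite sum since the
coefficients vanish beyond the degree `d_{p,s,n}`. -/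
noncomputable def borweinM (p s n b : ℕ) : ℤ :=
  ∑ l ∈ Finset.range (borweinDeg p s n + 1), borweinCoeff p s n (b + l * (p * (n + 1)))

lemma sum_Icc_one_eq (t : ℕ) : ∑ k ∈ Finset.Icc 1 t, k = ∑ k ∈ Finset.range (t+1), k := by
  induction t with
  | zero => simp
  | succ m ih => rw [Finset.sum_Icc_succ_top (by omega), ih, Finset.sum_range_succ _ (m+1)]

lemma borweinPoly_natDegree_le (p s n : ℕ) (hp3 : 3 ≤ p) :
    (borweinPoly p s n).natDegree ≤ borweinDeg p s n := by
  obtain ⟨t, rfl⟩ : ∃ t, p = t + 1 := ⟨p - 1, by omega⟩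
  have h1 : (borweinPoly (t+1) s n).natDegree ≤
      ∑ j ∈ range (n+1), ∑ k ∈ Icc 1 t, s * ((t+1) * j + k) := by
    refine le_trans (natDegree_prod_le _ _) (Finset.sum_le_sum ?_)
    intro j _
    have : (t + 1) - 1 = t := by omega
    rw [this]
    refine le_trans (natDegree_prod_le _ _) (Finset.sum_le_sum ?_)
    intro k _
    refine le_trans natDegree_pow_le (Nat.mul_le_mul_left s ?_)
    exact le_trans (natDegree_sub_le _ _) (by simp)
  have hG : (∑ k ∈ Icc 1 t, k) * 2 = t * (t + 1) := by
    rw [sum_Icc_one_eq, Finset.sum_range_id_mul_two, Nat.add_sub_cancel, Nat.mul_comm]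
  have hR : (∑ j ∈ range (n+1), j) * 2 = (n+1) * n := by
    rw [Finset.sum_range_id_mul_two]; simp
  set G := ∑ k ∈ Icc 1 t, k with hGdef
  set R := ∑ j ∈ range (n+1), j with hRdef
  set T := ∑ j ∈ range (n+1), ∑ k ∈ Icc 1 t, s * ((t+1) * j + k) with hT
  have inner : ∀ j, ∑ k ∈ Icc 1 t, s * ((t+1) * j + k) = (s * ((t+1) * j)) * t + s * G := by
    intro j
    simp only [mul_add]
    rw [Finset.sum_add_distrib, Finset.sum_const, Nat.card_Icc, ← Finset.mul_sum, ← hGdef]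
    simp only [Nat.add_sub_cancel, smul_eq_mul]
    ring
  have h3 : 2 * T = (t+1) * t * s * (n+1)^2 := by
    rw [hT, Finset.sum_congr rfl (fun j _ => inner j), Finset.sum_add_distrib,
      Finset.sum_const, card_range, ← Finset.sum_mul, smul_eq_mul]
    rw [show (∑ j ∈ range (n+1), s * ((t+1) * j)) = s * ((t+1) * R) by
      rw [hRdef, Finset.mul_sum, Finset.mul_sum]]
    have e1 : 2 * ((s * ((t+1) * R)) * t + (n+1) * (s * G))
        = s * (t+1) * t * (R * 2) + (n+1) * s * (G * 2) := by ring
    rw [e1, hR, hG]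
    ring
  have hD : borweinDeg (t+1) s n = ((t+1) * t * s * (n+1)^2) / 2 := by
    have h : (t + 1) - 1 = t := by omega
    rw [borweinDeg, h]
  omega

lemma rootSum {N : ℕ} (hN : 0 < N) {ζ : ℂ} (hζ : IsPrimitiveRoot ζ N) (k : ℤ) :
    ∑ m ∈ range N, ζ ^ (k * m) = if (N:ℤ) ∣ k then (N:ℂ) else 0 := by
  by_cases h : (N:ℤ) ∣ k
  · simp only [if_pos h]
    have he : ∀ m ∈ range N, ζ ^ (k * (m:ℤ)) = 1 := by
      intro m _
      rw [hζ.zpow_eq_one_iff_dvd]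
      exact Dvd.dvd.mul_right h m
    rw [Finset.sum_congr rfl he]
    simp
  · simp only [if_neg h]
    have hx1 : ζ ^ k ≠ 1 := fun hh => h ((hζ.zpow_eq_one_iff_dvd k).mp hh)
    have he : ∀ m ∈ range N, ζ ^ (k * (m:ℤ)) = (ζ ^ k) ^ m := by
      intro m _
      rw [← zpow_natCast (ζ^k) m, ← zpow_mul]
    rw [Finset.sum_congr rfl he, geom_sum_eq hx1]
    have hN1 : (ζ ^ k) ^ N = 1 := by
      rw [← zpow_natCast (ζ^k) N, ← zpow_mul, mul_comm, zpow_mul, zpow_natCast,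
        hζ.pow_eq_one, one_zpow]
    rw [hN1]
    simp

lemma eval_borweinPoly (p s n : ℕ) (η : ℂ) :
    eval η ((borweinPoly p s n).map (Int.castRingHom ℂ)) =
      ∏ j ∈ range (n+1), ∏ k ∈ Icc 1 (p-1), (1 - η ^ (p*j+k))^s := by
  simp [borweinPoly, Polynomial.map_prod, Polynomial.map_pow, Polynomial.map_sub,
    eval_prod, eval_pow, eval_sub, eval_one, eval_X]

lemma eval_zero_case {p s n d : ℕ} (hp : p.Prime) (hp3 : 3 ≤ p) (hs : 1 ≤ s) {η : ℂ}
    (hη : IsPrimitiveRoot η d) (hd : d ∣ p * (n+1)) (hpd : ¬ p ∣ d) :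
    ∏ j ∈ range (n+1), ∏ k ∈ Icc 1 (p-1), (1 - η ^ (p*j+k))^s = 0 := by
  have hd0 : d ≠ 0 := by rintro rfl; exact hpd (dvd_zero p)
  haveI : NeZero d := ⟨hd0⟩
  have hco : Nat.Coprime p d := (Nat.Prime.coprime_iff_not_dvd hp).mpr hpd
  have hdn : d ∣ n + 1 := (Nat.Coprime.dvd_of_dvd_mul_left hco.symm) hd
  obtain ⟨u, hu⟩ := (ZMod.isUnit_iff_coprime p d).mpr hco
  set x : ZMod d := ↑u⁻¹ * (-1) with hxdef
  have hx : (p : ZMod d) * x = -1 := by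
    rw [hxdef, ← hu, ← mul_assoc, Units.mul_inv, one_mul]
  set j := x.val with hjdef
  have hjd : j < d := ZMod.val_lt x
  have hdvd : d ∣ p * j + 1 := by
    have hc : ((p * j + 1 : ℕ) : ZMod d) = 0 := by
      push_cast
      rw [hjdef, ZMod.natCast_val x, ZMod.cast_id, hx]
      ring
    exact (ZMod.natCast_eq_zero_iff _ _).mp hc
  refine Finset.prod_eq_zero (Finset.mem_range.mpr (lt_of_lt_of_le hjd (Nat.le_of_dvd (by omega) hdn))) ?_
  refine Finset.prod_eq_zero (Finset.mem_Icc.mpr ⟨le_refl 1, by omega⟩) ?_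
  have h1 : η ^ (p * j + 1) = 1 := (hη.pow_eq_one_iff_dvd _).mpr hdvd
  rw [h1, sub_self, zero_pow (by omega)]

lemma prod_Icc_one_sub_pow {d : ℕ} (hd1 : 1 ≤ d) {η : ℂ} (hη : IsPrimitiveRoot η d) :
    ∏ u ∈ Icc 1 (d-1), (1 - η ^ u) = (d : ℂ) := by
  have hη' : IsPrimitiveRoot η ((d-1)+1) := by rwa [Nat.sub_add_cancel hd1]
  have h := hη'.prod_one_sub_pow_eq_order
  have h2 : Icc 1 (d-1) = Ico 1 d := by ext x; simp only [Finset.mem_Icc, Finset.mem_Ico]; omega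
  rw [h2, Finset.prod_Ico_eq_prod_range]
  have h3 : ∀ i ∈ range (d - 1), (1 - η ^ (1 + i)) = (1 - η ^ (i + 1)) := by
    intro i _; rw [add_comm]
  rw [Finset.prod_congr rfl h3, h]
  have : ((d - 1 : ℕ) : ℂ) = (d : ℂ) - 1 := by
    push_cast [Nat.cast_sub hd1]; ring
  rw [this]; ring

lemma block_prod {p e : ℕ} (hp3 : 3 ≤ p) (he : 0 < e) {η : ℂ}
    (hη : IsPrimitiveRoot η (p * e)) :
    ∏ j ∈ range e, ∏ k ∈ Icc 1 (p-1), (1 - η ^ (p*j+k)) = (p : ℂ) := by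
  obtain ⟨e', rfl⟩ : ∃ e', e = e' + 1 := ⟨e - 1, by omega⟩
  have hp0 : 0 < p := by omega
  have hmul : p * (e' + 1) = p * e' + p := by ring
  have hd1 : 1 ≤ p * (e' + 1) := by omega
  have hfull := prod_Icc_one_sub_pow hd1 hη
  have hηp : IsPrimitiveRoot (η ^ p) (e' + 1) := hη.pow (by omega) rfl
  have hsub := prod_Icc_one_sub_pow (by omega : 1 ≤ e' + 1) hηp
  rw [← Finset.prod_filter_mul_prod_filter_not (Icc 1 (p*(e'+1)-1)) (fun u => p ∣ u)] at hfull
  have hmult : ∏ u ∈ (Icc 1 (p*(e'+1)-1)).filter (fun u => p ∣ u), (1 - η ^ u)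
      = ((e' + 1 : ℕ) : ℂ) := by
    have himg : (Icc 1 (p*(e'+1)-1)).filter (fun u => p ∣ u)
        = (Icc 1 (e'+1-1)).image (fun v => p * v) := by
      ext u
      simp only [Finset.mem_filter, Finset.mem_Icc, Finset.mem_image, Nat.add_sub_cancel]
      constructor
      · rintro ⟨⟨h1, h2⟩, v, rfl⟩
        refine ⟨v, ⟨?_, ?_⟩, rfl⟩
        · rcases Nat.eq_zero_or_pos v with h | h
          · subst h; simp at h1
          · exact h
        · by_contra hvc
          have hle : e' + 1 ≤ v := by omega
          have := Nat.mul_le_mul_left p hle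
          omega
      · rintro ⟨v, ⟨h1, h2⟩, rfl⟩
        have h4 : p * v ≤ p * e' := Nat.mul_le_mul_left p h2
        have h5 : 0 < p * v := Nat.mul_pos hp0 (by omega)
        exact ⟨⟨by omega, by omega⟩, ⟨v, rfl⟩⟩
    rw [himg, Finset.prod_image (fun a _ b _ h => Nat.eq_of_mul_eq_mul_left hp0 h), ← hsub]
    exact Finset.prod_congr rfl fun v _ => by rw [pow_mul]
  have hblock : ∏ u ∈ (Icc 1 (p*(e'+1)-1)).filter (fun u => ¬ p ∣ u), (1 - η ^ u)
      = ∏ j ∈ range (e'+1), ∏ k ∈ Icc 1 (p-1), (1 - η ^ (p*j+k)) := by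
    rw [← Finset.prod_product']
    refine Finset.prod_nbij' (fun u => (u / p, u % p)) (fun jk => p * jk.1 + jk.2) ?_ ?_ ?_ ?_ ?_
    · intro u hu
      simp only [Finset.mem_filter, Finset.mem_Icc] at hu
      obtain ⟨⟨h1, h2⟩, h3⟩ := hu
      simp only [Finset.mem_product, Finset.mem_range, Finset.mem_Icc]
      have hmod : u % p ≠ 0 := fun h => h3 (Nat.dvd_of_mod_eq_zero h)
      have hmlt : u % p < p := Nat.mod_lt u hp0
      exact ⟨Nat.div_lt_of_lt_mul (by omega), by omega, by omega⟩
    · intro jk hjk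
      simp only [Finset.mem_product, Finset.mem_range, Finset.mem_Icc] at hjk
      obtain ⟨h1, h2, h3⟩ := hjk
      simp only [Finset.mem_filter, Finset.mem_Icc]
      have hub : p * jk.1 ≤ p * e' := Nat.mul_le_mul_left p (by omega)
      refine ⟨⟨by omega, by omega⟩, fun hdvd => ?_⟩
      have hdk : p ∣ jk.2 := by
        rcases hdvd with ⟨c, hc⟩
        have hc2 : p * c ≥ p * jk.1 := by omega
        have : jk.1 ≤ c := Nat.le_of_mul_le_mul_left hc2 hp0
        exact ⟨c - jk.1, by rw [Nat.mul_sub]; omega⟩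
      have := Nat.le_of_dvd (by omega) hdk
      omega
    · intro u _
      exact Nat.div_add_mod u p
    · intro jk hjk
      simp only [Finset.mem_product, Finset.mem_range, Finset.mem_Icc] at hjk
      have hk : jk.2 < p := by omega
      simp [Nat.mul_add_div hp0, Nat.mul_add_mod, Nat.div_eq_of_lt hk, Nat.mod_eq_of_lt hk]
    · intro u _
      rw [Nat.div_add_mod]
  rw [hmult, hblock] at hfull
  have he0 : ((e' + 1 : ℕ) : ℂ) ≠ 0 := Nat.cast_ne_zero.mpr (by omega)
  apply mul_left_cancel₀ he0
  rw [hfull]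
  push_cast
  ring

lemma prod_blocks {e : ℕ} (F : ℕ → ℂ) (hper : ∀ j, F (j + e) = F j) :
    ∀ c, ∏ j ∈ range (e * c), F j = (∏ j ∈ range e, F j) ^ c := by
  have hshift : ∀ c i, F (e * c + i) = F i := by
    intro c
    induction c with
    | zero => simp
    | succ m ih =>
      intro i
      rw [show e * (m+1) + i = (e*m + i) + e by ring, hper, ih]
  intro c
  induction c with
  | zero => simp
  | succ m ih =>
    rw [show e * (m+1) = e*m + e by ring, Finset.prod_range_add, ih, pow_succ]
    congr 1
    exact Finset.prod_congr rfl fun i _ => hshift m i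

lemma eval_pe_case {p s n e : ℕ} (hp3 : 3 ≤ p) (he : 0 < e) {η : ℂ}
    (hη : IsPrimitiveRoot η (p * e)) (hen : e ∣ n + 1) :
    ∏ j ∈ range (n+1), ∏ k ∈ Icc 1 (p-1), (1 - η ^ (p*j+k))^s
      = (p : ℂ) ^ (s * ((n+1)/e)) := by
  have h1 : ∀ j, ∏ k ∈ Icc 1 (p-1), (1 - η ^ (p*j+k))^s
      = (∏ k ∈ Icc 1 (p-1), (1 - η ^ (p*j+k)))^s := fun j => Finset.prod_pow _ _ _
  rw [Finset.prod_congr rfl (fun j _ => h1 j), Finset.prod_pow]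
  have h2 : ∏ j ∈ range (n+1), ∏ k ∈ Icc 1 (p-1), (1 - η ^ (p*j+k)) = (p:ℂ) ^ ((n+1)/e) := by
    rw [show n + 1 = e * ((n+1)/e) from (Nat.mul_div_cancel' hen).symm]
    rw [prod_blocks _ (fun j => ?_) ((n+1)/e), block_prod hp3 he hη]
    · rw [Nat.mul_div_cancel_left _ he]
    · refine Finset.prod_congr rfl fun k _ => ?_
      rw [show p*(j+e)+k = (p*j+k) + p*e by ring, pow_add, hη.pow_eq_one, mul_one]
  rw [h2, ← pow_mul, mul_comm ((n+1)/e) s]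

lemma coeff_filter_sum {p s n b : ℕ} (hp3 : 3 ≤ p) (hb : b < p * (n + 1)) :
    ∑ i ∈ range (borweinDeg p s n + 1),
      (if ((p * (n+1) : ℕ) : ℤ) ∣ ((i : ℤ) - (b : ℤ)) then borweinCoeff p s n i else 0)
      = borweinM p s n b := by
  set N := p * (n + 1) with hNdef
  set D := borweinDeg p s n with hDdef
  have hN : 0 < N := by omega
  have hdeg : (borweinPoly p s n).natDegree ≤ D := borweinPoly_natDegree_le p s n hp3
  rw [Finset.sum_ite, Finset.sum_const, smul_zero, add_zero]
  rw [borweinM, ← hNdef, ← hDdef]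
  have hzero : ∀ l ∈ range (D + 1), l ∉ (range (D+1)).filter (fun l => b + l * N ≤ D) →
      borweinCoeff p s n (b + l * N) = 0 := by
    intro l hl hnl
    simp only [Finset.mem_filter, hl, true_and] at hnl
    exact Polynomial.coeff_eq_zero_of_natDegree_lt (by omega)
  rw [← Finset.sum_subset (Finset.filter_subset _ _) hzero]
  refine (Finset.sum_nbij' (fun l => b + l * N) (fun i => (i - b) / N) ?_ ?_ ?_ ?_ ?_).symm
  · intro l hl
    simp only [Finset.mem_filter, Finset.mem_range] at hl ⊢
    refine ⟨by omega, ?_⟩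
    have : ((b : ℤ) + l * N) - b = N * l := by ring
    exact ⟨l, by push_cast; omega⟩
  · intro i hi
    simp only [Finset.mem_filter, Finset.mem_range] at hi ⊢
    obtain ⟨hiD, t, ht⟩ := hi
    have ht0 : 0 ≤ t := by
      by_contra hc
      push_neg at hc
      have : (t : ℤ) ≤ -1 := by omega
      nlinarith [this, (by positivity : (0:ℤ) < (N:ℤ))]
    obtain ⟨u, rfl⟩ := Int.eq_ofNat_of_zero_le ht0
    have hieq : i = b + N * u := by omega
    have hdiv : (i - b) / N = u := by
      rw [hieq, Nat.add_sub_cancel_left, Nat.mul_div_cancel_left _ hN]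
    constructor
    · rw [hdiv]
      have : u ≤ N * u := Nat.le_mul_of_pos_left u hN
      omega
    · rw [hdiv, Nat.mul_comm]; omega
  · intro l hl
    show (b + l * N - b) / N = l
    rw [Nat.add_sub_cancel_left, Nat.mul_div_cancel _ hN]
  · intro i hi
    simp only [Finset.mem_filter, Finset.mem_range] at hi
    obtain ⟨hiD, t, ht⟩ := hi
    have ht0 : 0 ≤ t := by
      by_contra hc
      push_neg at hc
      have : (t : ℤ) ≤ -1 := by omega
      nlinarith [this, (by positivity : (0:ℤ) < (N:ℤ))]
    obtain ⟨u, rfl⟩ := Int.eq_ofNat_of_zero_le ht0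
    have hieq : i = b + N * u := by omega
    have hdiv : (i - b) / N = u := by
      rw [hieq, Nat.add_sub_cancel_left, Nat.mul_div_cancel_left _ hN]
    show b + (i - b) / N * N = i
    rw [hdiv, hieq, Nat.mul_comm]
  · intro l _
    rfl



lemma borweinM_complex {p s n b : ℕ} (hp3 : 3 ≤ p) (hb : b < p * (n + 1)) {ζ : ℂ}
    (hζ : IsPrimitiveRoot ζ (p * (n + 1))) :
    ((p * (n + 1) : ℕ) : ℂ) * ((borweinM p s n b : ℤ) : ℂ)
      = ∑ m ∈ range (p * (n + 1)), ζ ^ (-(b : ℤ) * (m : ℤ)) *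
          Polynomial.eval (ζ ^ m) ((borweinPoly p s n).map (Int.castRingHom ℂ)) := by
  set N := p * (n + 1) with hNdef
  set D := borweinDeg p s n with hDdef
  set P := (borweinPoly p s n).map (Int.castRingHom ℂ) with hPdef
  have hN : 0 < N := by omega
  have hζ0 : ζ ≠ 0 := by
    intro h
    have h1 := hζ.pow_eq_one
    rw [h, zero_pow (by omega)] at h1
    exact zero_ne_one h1
  have hdeg : P.natDegree < D + 1 := by
    have h1 : P.natDegree ≤ (borweinPoly p s n).natDegree := natDegree_map_le
    have h2 := borweinPoly_natDegree_le p s n hp3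
    omega
  have hterm : ∀ m ∈ range N, ζ ^ (-(b:ℤ) * (m:ℤ)) * Polynomial.eval (ζ^m) P
      = ∑ i ∈ range (D+1), P.coeff i * ζ ^ (((i:ℤ) - b) * m) := by
    intro m _
    rw [eval_eq_sum_range' hdeg, Finset.mul_sum]
    refine Finset.sum_congr rfl fun i _ => ?_
    rw [show (ζ^m)^i = ζ^((m*i : ℕ) : ℤ) by rw [← pow_mul, zpow_natCast]]
    rw [show ζ ^ (-(b:ℤ) * (m:ℤ)) * (P.coeff i * ζ ^ ((m*i : ℕ) : ℤ))
        = P.coeff i * (ζ ^ (-(b:ℤ) * (m:ℤ)) * ζ ^ ((m*i : ℕ) : ℤ)) from by ring]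
    rw [← zpow_add₀ hζ0]
    congr 1
    push_cast
    ring
  rw [Finset.sum_congr rfl hterm, Finset.sum_comm]
  have hinner : ∀ i ∈ range (D+1), ∑ m ∈ range N, P.coeff i * ζ ^ (((i:ℤ) - b) * m)
      = (N:ℂ) * (if ((N:ℕ):ℤ) ∣ ((i:ℤ) - b) then P.coeff i else 0) := by
    intro i _
    rw [← Finset.mul_sum, rootSum hN hζ ((i:ℤ) - b)]
    split_ifs <;> ring
  rw [Finset.sum_congr rfl hinner, ← Finset.mul_sum]
  congr 1
  rw [show ((borweinM p s n b : ℤ) : ℂ) = ((∑ i ∈ range (D + 1),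
      (if ((N:ℕ):ℤ) ∣ ((i:ℤ) - b) then borweinCoeff p s n i else 0) : ℤ) : ℂ) from by
    rw [coeff_filter_sum hp3 hb]]
  push_cast
  refine Finset.sum_congr rfl fun i _ => ?_
  rw [hPdef, coeff_map]
  split_ifs <;> simp [borweinCoeff]

lemma prim_pow_gcd {N : ℕ} (hN : 0 < N) {ζ : ℂ} (hζ : IsPrimitiveRoot ζ N) (m : ℕ) :
    IsPrimitiveRoot (ζ ^ m) (N / Nat.gcd N m) := by
  have hg : 0 < Nat.gcd N m := Nat.gcd_pos_of_pos_left m hN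
  have h1 : IsPrimitiveRoot (ζ ^ (Nat.gcd N m)) (N / Nat.gcd N m) :=
    hζ.pow hN (Nat.mul_div_cancel' (Nat.gcd_dvd_left N m)).symm
  have h2 : Nat.Coprime (m / Nat.gcd N m) (N / Nat.gcd N m) := by
    have h3 := Nat.coprime_div_gcd_div_gcd (m := m) (n := N) (by rwa [Nat.gcd_comm])
    rwa [Nat.gcd_comm m N] at h3
  have h3 : ζ ^ m = (ζ ^ Nat.gcd N m) ^ (m / Nat.gcd N m) := by
    rw [← pow_mul, Nat.mul_div_cancel' (Nat.gcd_dvd_right N m)]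
  rw [h3]
  exact h1.pow_of_coprime _ h2



theorem stmt_1 (p s n b : ℕ) (hp : p.Prime) (hp3 : 3 ≤ p) (hs : 1 ≤ s)
    (hb : b < p * (n + 1)) (hpb : p ∣ b)
    (hgt : ((p : ℝ) - 1) * (p : ℝ) ^ (((s : ℝ) * ((n : ℝ) + 1)) / 2 - 1) > (n : ℝ) + 1) :
    0 < borweinM p s n b := by
  set N := p * (n + 1) with hNdef
  have hN : 0 < N := by positivity
  set ζ : ℂ := Complex.exp (2 * Real.pi * Complex.I / N) with hζdef
  have hζ : IsPrimitiveRoot ζ N := Complex.isPrimitiveRoot_exp N hN.ne'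
  have habs : ‖ζ‖ = 1 := by
    have h1 : ‖ζ‖ ^ N = 1 := by rw [← norm_pow, hζ.pow_eq_one, norm_one]
    rcases lt_trichotomy ‖ζ‖ 1 with h | h | h
    · have := pow_lt_one₀ (norm_nonneg ζ) h hN.ne'
      rw [h1] at this; norm_num at this
    · exact h
    · have := one_lt_pow₀ h hN.ne'
      rw [h1] at this; norm_num at this
  set P := (borweinPoly p s n).map (Int.castRingHom ℂ) with hPdef
  set f : ℕ → ℂ := fun m => ζ ^ (-(b:ℤ) * (m:ℤ)) * Polynomial.eval (ζ^m) P with hfdef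
  have key : ((N:ℕ):ℂ) * ((borweinM p s n b : ℤ) : ℂ) = ∑ m ∈ range N, f m :=
    borweinM_complex hp3 hb hζ
  set S₀ : Finset ℕ := (Icc 1 (p-1)).image (fun t => (n+1) * t) with hS₀def
  have hS₀sub : S₀ ⊆ range N := by
    intro m hm
    simp only [hS₀def, Finset.mem_image, Finset.mem_Icc] at hm
    obtain ⟨t, ⟨ht1, ht2⟩, rfl⟩ := hm
    simp only [Finset.mem_range]
    have h1 : (n+1) * t ≤ (n+1) * (p-1) := Nat.mul_le_mul_left _ ht2
    have h2 : (n+1) * (p-1) + (n+1) = (n+1) * p := by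
      rw [← Nat.mul_succ]; congr 1; omega
    have h3 : N = (n+1) * p := by rw [hNdef]; ring
    omega
  have hS₀card : S₀.card = p - 1 := by
    rw [hS₀def, Finset.card_image_of_injective _ (fun a c h =>
      Nat.eq_of_mul_eq_mul_left (by omega) h), Nat.card_Icc]
    omega
  have hfS₀ : ∀ m ∈ S₀, f m = ((p:ℂ)) ^ (s * (n+1)) := by
    intro m hm
    simp only [hS₀def, Finset.mem_image, Finset.mem_Icc] at hm
    obtain ⟨t, ⟨ht1, ht2⟩, rfl⟩ := hm
    have hcop : Nat.gcd p t = 1 :=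
      Nat.Coprime.gcd_eq_one ((Nat.Prime.coprime_iff_not_dvd hp).mpr
        (Nat.not_dvd_of_pos_of_lt (by omega) (by omega)))
    have hgcd : Nat.gcd N ((n+1) * t) = n + 1 := by
      rw [hNdef, mul_comm p (n+1), Nat.gcd_mul_left, hcop, mul_one]
    have hd : N / Nat.gcd N ((n+1)*t) = p := by
      rw [hgcd, hNdef, mul_comm p (n+1), Nat.mul_div_cancel_left _ (by omega)]
    have hη : IsPrimitiveRoot (ζ ^ ((n+1)*t)) (p * 1) := by
      have h0 := prim_pow_gcd hN hζ ((n+1)*t)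
      rwa [hd, ← mul_one p] at h0
    have heval : Polynomial.eval (ζ^((n+1)*t)) P = (p:ℂ) ^ (s * (n+1)) := by
      rw [hPdef, eval_borweinPoly, eval_pe_case hp3 (by omega) hη (by omega : 1 ∣ n + 1)]
      norm_num
    have hzpow : ζ ^ (-(b:ℤ) * (((n+1)*t : ℕ):ℤ)) = 1 := by
      rw [hζ.zpow_eq_one_iff_dvd]
      obtain ⟨b', rfl⟩ := hpb
      exact ⟨-(b' * t), by rw [hNdef]; push_cast; ring⟩
    rw [hfdef]
    simp only []
    rw [hzpow, heval, one_mul]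
  set B : ℝ := (p:ℝ) ^ (((s:ℝ) * ((n:ℝ)+1)) / 2) with hBdef
  have hppos : (0:ℝ) < p := by positivity
  have hp1 : (1:ℝ) < p := by exact_mod_cast (by omega : 1 < p)
  have hBpos : 0 < B := Real.rpow_pos_of_pos hppos _
  have hrest : ∀ m ∈ range N \ S₀, -B ≤ (f m).re := by
    intro m hm
    simp only [Finset.mem_sdiff, Finset.mem_range] at hm
    obtain ⟨hmN, hmS₀⟩ := hm
    set g := Nat.gcd N m with hgdef
    set d := N / g with hddef
    have hg : 0 < g := Nat.gcd_pos_of_pos_left m hN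
    have hgN : g ∣ N := Nat.gcd_dvd_left N m
    have hdN : d ∣ N := Nat.div_dvd_of_dvd hgN
    have hdpos : 0 < d := Nat.div_pos (Nat.le_of_dvd hN hgN) hg
    have hη : IsPrimitiveRoot (ζ ^ m) d := prim_pow_gcd hN hζ m
    by_cases hpd : p ∣ d
    · obtain ⟨e, he⟩ := hpd
      have hepos : 0 < e := by
        rcases Nat.eq_zero_or_pos e with h | h
        · subst h; omega
        · exact h
      have hen : e ∣ n + 1 := by
        have h1 : p * e ∣ p * (n+1) := he ▸ hdN
        exact (mul_dvd_mul_iff_left (by omega : p ≠ 0)).mp h1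
      have he2 : 2 ≤ e := by
        rcases Nat.lt_or_ge e 2 with h | h
        · exfalso
          have he1 : e = 1 := by omega
          subst he1
          rw [mul_one] at he
          have hgeq : g = n + 1 := by
            have h2 : d * g = N := Nat.div_mul_cancel hgN
            rw [he] at h2
            have h3 : p * g = p * (n+1) := by rw [h2, hNdef]
            exact Nat.eq_of_mul_eq_mul_left (by omega) h3
          have hgm : g ∣ m := Nat.gcd_dvd_right N m
          obtain ⟨t, ht⟩ := hgm
          have ht1 : 1 ≤ t := by
            rcases Nat.eq_zero_or_pos t with h' | h'
            · exfalso
              have hm0 : m = 0 := by rw [ht, h', mul_zero]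
              rw [hm0, Nat.gcd_zero_right] at hgdef
              rw [hgdef, Nat.div_self hN] at hddef
              omega
            · exact h'
          have ht2 : t ≤ p - 1 := by
            have h4 : (n+1) * t < (n+1) * p := by
              rw [hgeq] at ht
              rw [hNdef, mul_comm p (n+1)] at hmN
              omega
            have := Nat.lt_of_mul_lt_mul_left h4
            omega
          refine absurd (Finset.mem_image.mpr ⟨t, Finset.mem_Icc.mpr ⟨ht1, ht2⟩, ?_⟩) hmS₀
          rw [← hgeq, ← ht]
        · exact h
      have heval : Polynomial.eval (ζ^m) P = (p:ℂ) ^ (s * ((n+1)/e)) := by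
        rw [hPdef, eval_borweinPoly, eval_pe_case hp3 hepos (he ▸ hη) hen]
      have habs2 : ‖f m‖ = (p:ℝ) ^ (s * ((n+1)/e)) := by
        rw [hfdef]
        simp only []
        rw [norm_mul, heval, norm_zpow, habs, one_zpow, one_mul]
        rw [show ((p:ℂ)) ^ (s * ((n+1)/e)) = (((p:ℝ) ^ (s * ((n+1)/e)) : ℝ) : ℂ) by push_cast; ring]
        rw [Complex.norm_real, Real.norm_eq_abs]
        exact abs_of_nonneg (by positivity)
      have hble : (p:ℝ) ^ (s * ((n+1)/e)) ≤ B := by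
        rw [show (p:ℝ) ^ (s * ((n+1)/e)) = (p:ℝ) ^ ((s * ((n+1)/e) : ℕ) : ℝ) from
          (Real.rpow_natCast _ _).symm, hBdef]
        apply Real.rpow_le_rpow_of_exponent_le (le_of_lt hp1)
        have h1 : (n+1)/e * 2 ≤ (n+1)/e * e := Nat.mul_le_mul_left _ he2
        rw [Nat.div_mul_cancel hen] at h1
        have h2 : 2 * (s * ((n+1)/e)) ≤ s * (n+1) := by
          calc 2 * (s * ((n+1)/e)) = s * ((n+1)/e * 2) := by ring
          _ ≤ s * (n+1) := Nat.mul_le_mul_left s h1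
        have h3 := (Nat.cast_le (α := ℝ)).mpr h2
        push_cast at h3 ⊢
        linarith
      calc -B ≤ -((p:ℝ) ^ (s * ((n+1)/e))) := by linarith
      _ = -(‖f m‖) := by rw [habs2]
      _ ≤ (f m).re := by
        have h5 := Complex.abs_re_le_norm (f m)
        have h6 := neg_abs_le ((f m).re)
        linarith
    · have heval : Polynomial.eval (ζ^m) P = 0 := by
        rw [hPdef, eval_borweinPoly]
        exact eval_zero_case hp hp3 hs hη hdN hpd
      rw [hfdef]
      simp only []
      rw [heval, mul_zero]
      simp only [Complex.zero_re]
      linarith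
  -- take real parts of the key identity
  have hresum : (N:ℝ) * ((borweinM p s n b : ℤ) : ℝ) = ∑ m ∈ range N, (f m).re := by
    have h1 : (((N:ℝ) * ((borweinM p s n b : ℤ) : ℝ) : ℝ) : ℂ) = ∑ m ∈ range N, f m := by
      rw [← key]; push_cast; ring
    calc (N:ℝ) * ((borweinM p s n b : ℤ) : ℝ)
        = ((((N:ℝ) * ((borweinM p s n b : ℤ) : ℝ) : ℝ) : ℂ)).re := (Complex.ofReal_re _).symm
    _ = (∑ m ∈ range N, f m).re := by rw [h1]
    _ = ∑ m ∈ range N, (f m).re := Complex.re_sum _ _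
  have hsplit : ∑ m ∈ range N, (f m).re
      = (∑ m ∈ range N \ S₀, (f m).re) + ∑ m ∈ S₀, (f m).re := (Finset.sum_sdiff hS₀sub).symm
  have hmain : ∑ m ∈ S₀, (f m).re = ((p:ℝ) - 1) * (p:ℝ) ^ (s * (n+1)) := by
    have hre : ∀ m ∈ S₀, (f m).re = (p:ℝ) ^ (s * (n+1)) := by
      intro m hm
      rw [hfS₀ m hm, show ((p:ℂ)) ^ (s * (n+1)) = (((p:ℝ) ^ (s * (n+1)) : ℝ) : ℂ) by push_cast; ring,
        Complex.ofReal_re]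
    rw [Finset.sum_congr rfl hre, Finset.sum_const, hS₀card, nsmul_eq_mul]
    congr 1
    rw [Nat.cast_sub (by omega)]
    norm_num
  have hrestsum : -((N:ℝ) * B) ≤ ∑ m ∈ range N \ S₀, (f m).re := by
    have h1 : ∑ m ∈ range N \ S₀, (-B) ≤ ∑ m ∈ range N \ S₀, (f m).re :=
      Finset.sum_le_sum hrest
    rw [Finset.sum_const, nsmul_eq_mul] at h1
    have hcard : ((range N \ S₀).card : ℝ) ≤ N := by
      have := Finset.card_le_card (Finset.sdiff_subset (s := range N) (t := S₀))
      rw [Finset.card_range] at this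
      exact_mod_cast this
    have h2 : -((N:ℝ) * B) ≤ ((range N \ S₀).card : ℝ) * (-B) := by
      rw [mul_neg, neg_le_neg_iff]
      exact mul_le_mul_of_nonneg_right hcard hBpos.le
    linarith
  have hpowK : (p:ℝ) ^ (s * (n+1)) = (p:ℝ) ^ (((s:ℝ) * ((n:ℝ)+1)) : ℝ) := by
    rw [← Real.rpow_natCast (p:ℝ) (s * (n+1))]
    congr 1
    push_cast
    ring
  have hNB : (N:ℝ) * B < ((p:ℝ)-1) * (p:ℝ) ^ (s * (n+1)) := by
    have hfac : (0:ℝ) < (p:ℝ) * B := by positivity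
    have h2 := mul_lt_mul_of_pos_right hgt hfac
    have hL : (N:ℝ) * B = ((n:ℝ)+1) * ((p:ℝ) * B) := by rw [hNdef]; push_cast; ring
    have hR : ((p:ℝ)-1) * (p:ℝ) ^ (((s:ℝ) * ((n:ℝ)+1)) / 2 - 1) * ((p:ℝ) * B)
        = ((p:ℝ)-1) * (p:ℝ) ^ (((s:ℝ) * ((n:ℝ)+1)) : ℝ) := by
      rw [hBdef, show ((s:ℝ) * ((n:ℝ)+1) : ℝ) = (((s:ℝ) * ((n:ℝ)+1)) / 2 - 1) + 1
        + ((s:ℝ) * ((n:ℝ)+1)) / 2 by ring, Real.rpow_add hppos, Real.rpow_add hppos,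
        Real.rpow_one]
      ring
    rw [hL, hpowK, ← hR]
    exact h2
  have hpos : 0 < (N:ℝ) * ((borweinM p s n b : ℤ) : ℝ) := by
    rw [hresum, hsplit, hmain]
    have : ((p:ℝ)-1) * (p:ℝ) ^ (s * (n+1)) - (N:ℝ) * B > 0 := by linarith
    linarith
  have hMpos : (0:ℝ) < ((borweinM p s n b : ℤ) : ℝ) := by
    by_contra hc
    push_neg at hc
    have h1 : (N:ℝ) * ((borweinM p s n b : ℤ) : ℝ) ≤ 0 :=
      mul_nonpos_of_nonneg_of_nonpos (by positivity) hc
    linarith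
  exact_mod_cast hMpos
end

section
/- For p = 3, s = 2: for every integer n ≥ 1 and every integer b with 0 ≤ b < 3(n+1) and 3 ∤ b, one has M_{3,2,n}(b) < 0. -/
open Polynomial Finset

/-- For a primitive `k`-th root of unity `ω` in ℂ, `∏_{r=1}^{k-1} (1 - ω^r) = k`. -/
lemma prod_one_sub_primitive {k : ℕ} (hk : 0 < k) {ω : ℂ} (hω : IsPrimitiveRoot ω k) :
    ∏ r ∈ Finset.Ico 1 k, (1 - ω ^ r) = (k : ℂ) := by
  have h1 : ∏ r ∈ Finset.range k, (X - C (ω ^ r)) = X ^ k - 1 := by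
    rw [X_pow_sub_one_eq_prod hk hω]
    refine Finset.prod_nbij (fun r => ω ^ r) ?_ ?_ ?_ (fun _ _ => rfl)
    · intro r hr
      exact (Polynomial.mem_nthRootsFinset hk 1).2 (by
        rw [← pow_mul, mul_comm, pow_mul, hω.pow_eq_one, one_pow])
    · intro a ha b hb hab
      exact hω.pow_inj (Finset.mem_range.1 ha) (Finset.mem_range.1 hb) hab
    · haveI : NeZero k := ⟨hk.ne'⟩
      intro μ hμ
      obtain ⟨i, hi, hiμ⟩ := hω.eq_pow_of_pow_eq_one ((Polynomial.mem_nthRootsFinset hk 1).1 hμ)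
      exact ⟨i, Finset.mem_range.2 hi, hiμ⟩
  have h2 : ∏ r ∈ Finset.Ico 1 k, (X - C (ω ^ r)) = ∑ i ∈ Finset.range k, (X : ℂ[X]) ^ i := by
    have hX1 : (X - 1 : ℂ[X]) ≠ 0 := by
      simpa using X_sub_C_ne_zero (1 : ℂ)
    apply mul_left_cancel₀ hX1
    have hsplit := Finset.prod_eq_prod_Ico_succ_bot hk (fun r => (X : ℂ[X]) - C (ω ^ r))
    rw [Finset.range_eq_Ico] at h1
    calc (X - 1 : ℂ[X]) * ∏ r ∈ Finset.Ico 1 k, (X - C (ω ^ r))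
        = ∏ r ∈ Finset.Ico 0 k, (X - C (ω ^ r)) := by rw [hsplit]; simp
      _ = X ^ k - 1 := h1
      _ = (X - 1) * ∑ i ∈ Finset.range k, (X : ℂ[X]) ^ i := by
          rw [← geom_sum_mul]; ring
  have := congrArg (Polynomial.eval 1) h2
  simpa [Polynomial.eval_prod] using this

lemma sum_pow_root {N : ℕ} {ζ : ℂ} (hζ : IsPrimitiveRoot ζ N) (k : ℕ) :
    ∑ j ∈ Finset.range N, ζ ^ (j * k) = if N ∣ k then (N : ℂ) else 0 := by
  have hrw : ∀ j, ζ ^ (j * k) = (ζ ^ k) ^ j := fun j => by rw [← pow_mul, mul_comm]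
  simp only [hrw]
  by_cases h : N ∣ k
  · rw [if_pos h]
    obtain ⟨c, rfl⟩ := h
    simp [pow_mul, hζ.pow_eq_one]
  · rw [if_neg h]
    have hy : (ζ ^ k) ≠ 1 := fun hy => h ((hζ.pow_eq_one_iff_dvd k).1 hy)
    have hgeom : (∑ j ∈ Finset.range N, (ζ ^ k) ^ j) * (ζ ^ k - 1) = 0 := by
      rw [geom_sum_mul, ← pow_mul, mul_comm k N, pow_mul, hζ.pow_eq_one, one_pow, sub_self]
    rcases mul_eq_zero.1 hgeom with h' | h'
    · exact h'
    · exact absurd (sub_eq_zero.1 h') hy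

lemma borweinDeg_eq (n : ℕ) : borweinDeg 3 2 n = 6 * (n + 1) ^ 2 := by
  unfold borweinDeg
  have : 3 * (3 - 1) * 2 * (n + 1) ^ 2 = 2 * (6 * (n + 1) ^ 2) := by ring
  rw [this]
  omega

lemma gauss_sum (n : ℕ) : ∑ j ∈ Finset.range (n + 1), (12 * j + 6) = 6 * (n + 1) ^ 2 := by
  induction n with
  | zero => simp
  | succ m ih => rw [Finset.sum_range_succ, ih]; ring

lemma borweinPoly_natDegree_le_s5 (n : ℕ) :
    (borweinPoly 3 2 n).natDegree ≤ 6 * (n + 1) ^ 2 := by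
  unfold borweinPoly
  refine le_trans (Polynomial.natDegree_prod_le _ _) ?_
  rw [← gauss_sum n]
  refine Finset.sum_le_sum fun j _ => ?_
  refine le_trans (Polynomial.natDegree_prod_le _ _) ?_
  have : ∀ k ∈ Finset.Icc 1 (3 - 1), ((1 - Polynomial.X ^ (3 * j + k) : Polynomial ℤ) ^ 2).natDegree
      ≤ 2 * (3 * j + k) := by
    intro k _
    refine le_trans (Polynomial.natDegree_pow_le) ?_
    have h1 : ((1 : Polynomial ℤ) - Polynomial.X ^ (3 * j + k)).natDegree ≤ 3 * j + k := by
      refine le_trans (Polynomial.natDegree_sub_le _ _) ?_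
      simp [Polynomial.natDegree_X_pow]
    omega
  refine le_trans (Finset.sum_le_sum this) ?_
  show (∑ k ∈ Finset.Icc 1 2, 2 * (3 * j + k)) ≤ 12 * j + 6
  rw [show Finset.Icc 1 2 = {1, 2} by rfl]
  simp
  omega

lemma borweinCoeff_eq_zero (n i : ℕ) (hi : 6 * (n + 1) ^ 2 < i) : borweinCoeff 3 2 n i = 0 :=
  Polynomial.coeff_eq_zero_of_natDegree_lt (lt_of_le_of_lt (borweinPoly_natDegree_le_s5 n) hi)

lemma aeval_borwein (n : ℕ) (x : ℂ) :
    (Polynomial.aeval x) (borweinPoly 3 2 n) =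
      ∏ m ∈ (Finset.range (3 * (n + 1))).filter (fun m => ¬ 3 ∣ m), (1 - x ^ m) ^ 2 := by
  unfold borweinPoly
  rw [map_prod]
  have hin : ∀ j ∈ Finset.range (n+1), (Polynomial.aeval x)
      (∏ k ∈ Finset.Icc 1 (3-1), (1 - Polynomial.X ^ (3 * j + k) : Polynomial ℤ) ^ 2)
      = ∏ k ∈ Finset.Icc 1 2, (1 - x ^ (3 * j + k)) ^ 2 := by
    intro j _
    rw [map_prod]
    norm_num
  rw [Finset.prod_congr rfl hin, ← Finset.prod_product']
  refine Finset.prod_nbij (fun jk => 3 * jk.1 + jk.2) ?_ ?_ ?_ (fun _ _ => rfl)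
  · rintro ⟨j, k⟩ h
    simp only [Finset.mem_product, Finset.mem_range, Finset.mem_Icc] at h
    simp only [Finset.mem_filter, Finset.mem_range]
    omega
  · rintro ⟨j₁, k₁⟩ h₁ ⟨j₂, k₂⟩ h₂ he
    simp only [Finset.mem_coe, Finset.mem_product, Finset.mem_range, Finset.mem_Icc] at h₁ h₂
    simp only at he
    simp only [Prod.mk.injEq]
    constructor <;> omega
  · intro m hm
    simp only [Finset.coe_filter, Finset.mem_range, Set.mem_setOf_eq] at hm
    refine ⟨⟨m / 3, m % 3⟩, ?_, by show 3 * (m / 3) + m % 3 = m; omega⟩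
    simp only [Finset.mem_coe, Finset.mem_product, Finset.mem_range, Finset.mem_Icc]
    omega

lemma prod_one_sub_not_dvd {d : ℕ} (hd3 : 3 ∣ d) (hd0 : 0 < d) {ω : ℂ}
    (hω : IsPrimitiveRoot ω d) :
    ∏ r ∈ (Finset.range d).filter (fun r => ¬ 3 ∣ r), (1 - ω ^ r) = 3 := by
  have hdd : d = 3 * (d / 3) := by omega
  have hd3pos : 0 < d / 3 := by omega
  have hB : ∏ r ∈ (Finset.Ico 1 d).filter (fun r => 3 ∣ r), (1 - ω ^ r) = ((d / 3 : ℕ) : ℂ) := by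
    rw [← prod_one_sub_primitive hd3pos (hω.pow hd0 hdd)]
    refine (Finset.prod_nbij (fun u => 3 * u) ?_ ?_ ?_ ?_).symm
    · intro u hu
      simp only [Finset.mem_Ico] at hu
      simp only [Finset.mem_filter, Finset.mem_Ico]
      omega
    · intro a _ b _ hab
      simpa using hab
    · intro r hr
      simp only [Finset.coe_filter, Finset.mem_Ico, Set.mem_setOf_eq] at hr
      obtain ⟨⟨hr1, hr2⟩, hr3⟩ := hr
      exact ⟨r / 3, by simp only [Finset.mem_coe, Finset.mem_Ico]; omega, by show 3 * (r / 3) = r; omega⟩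
    · intro u _
      rw [← pow_mul]
  have hA : ∏ r ∈ Finset.Ico 1 d, (1 - ω ^ r) = (d : ℂ) := prod_one_sub_primitive hd0 hω
  have hsplit := Finset.prod_filter_mul_prod_filter_not (Finset.Ico 1 d) (fun r => 3 ∣ r)
      (fun r => (1 : ℂ) - ω ^ r)
  rw [hB, hA] at hsplit
  have hfe : (Finset.range d).filter (fun r => ¬ 3 ∣ r)
      = (Finset.Ico 1 d).filter (fun r => ¬ 3 ∣ r) := by
    ext r
    simp only [Finset.mem_filter, Finset.mem_range, Finset.mem_Ico]
    omega
  rw [hfe]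
  have hdne : ((d / 3 : ℕ) : ℂ) ≠ 0 := Nat.cast_ne_zero.2 (by omega)
  have h3d : ((d / 3 : ℕ) : ℂ) * 3 = (d : ℂ) := by
    rw [show (3 : ℂ) = ((3 : ℕ) : ℂ) by norm_num, ← Nat.cast_mul]
    congr 1
    omega
  apply mul_left_cancel₀ hdne
  rw [hsplit, h3d]

lemma aeval_borwein_root (n : ℕ) {ζ : ℂ} (hζ : IsPrimitiveRoot ζ (3 * (n + 1))) (j : ℕ) :
    (Polynomial.aeval (ζ ^ j)) (borweinPoly 3 2 n) =
      if 3 ∣ (3 * (n + 1)) / Nat.gcd j (3 * (n + 1))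
      then (9 : ℂ) ^ (Nat.gcd j (3 * (n + 1))) else 0 := by
  set N := 3 * (n + 1) with hNdef
  set g := Nat.gcd j N with hgdef
  set d := N / g with hddef
  have hN : 0 < N := by omega
  have hg : g ∣ N := Nat.gcd_dvd_right j N
  have hgj : g ∣ j := Nat.gcd_dvd_left j N
  have hg0 : 0 < g := Nat.gcd_pos_of_pos_right j hN
  have hgd : g * d = N := Nat.mul_div_cancel' hg
  have hd0 : 0 < d := by
    rcases Nat.eq_zero_or_pos d with h | h
    · rw [h, mul_zero] at hgd; omega
    · exact h
  have hjd : (ζ ^ j) ^ d = 1 := by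
    rw [← pow_mul]
    have hj : j = g * (j / g) := (Nat.mul_div_cancel' hgj).symm
    have hthis : j * d = N * (j / g) := by
      conv_lhs => rw [hj]
      rw [← hgd]
      ring
    rw [hthis, pow_mul, hζ.pow_eq_one, one_pow]
  rw [aeval_borwein]
  by_cases h3d : 3 ∣ d
  · rw [if_pos h3d]
    have h1 : IsPrimitiveRoot (ζ ^ g) d := hζ.pow hN hgd.symm
    have hcop : Nat.Coprime (j / g) d := Nat.coprime_div_gcd_div_gcd hg0
    have hω : IsPrimitiveRoot (ζ ^ j) d := by
      have := h1.pow_of_coprime (j / g) hcop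
      rwa [← pow_mul, Nat.mul_div_cancel' hgj] at this
    set ω := ζ ^ j with hωdef
    have hmod : ∀ m : ℕ, ω ^ m = ω ^ (m % d) := by
      intro m
      conv_lhs => rw [show m = d * (m / d) + m % d from (Nat.div_add_mod m d).symm]
      rw [pow_add, pow_mul, hω.pow_eq_one, one_pow, one_mul]
    have hstep : ∏ m ∈ (Finset.range N).filter (fun m => ¬ 3 ∣ m), (1 - ω ^ m) ^ 2
        = ∏ p ∈ ((Finset.range d).filter (fun r => ¬ 3 ∣ r)) ×ˢ Finset.range g,
            (1 - ω ^ p.1) ^ 2 := by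
      refine Finset.prod_nbij (fun m => (m % d, m / d)) ?_ ?_ ?_ ?_
      · intro m hm
        simp only [Finset.mem_filter, Finset.mem_range] at hm
        simp only [Finset.mem_product, Finset.mem_filter, Finset.mem_range]
        refine ⟨⟨Nat.mod_lt m hd0, fun hdvd => hm.2 ?_⟩, ?_⟩
        · calc (3:ℕ) ∣ d * (m / d) + m % d := Nat.dvd_add (Dvd.dvd.mul_right h3d _) hdvd
            _ = m := Nat.div_add_mod m d
        · rw [Nat.div_lt_iff_lt_mul hd0]
          calc m < N := hm.1
            _ = g * d := hgd.symm
      · intro a _ b _ hab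
        simp only [Prod.mk.injEq] at hab
        rw [← Nat.div_add_mod a d, ← Nat.div_add_mod b d, hab.1, hab.2]
      · rintro ⟨r, t⟩ hp
        simp only [Finset.coe_product, Set.mem_prod, Finset.mem_coe, Finset.mem_filter,
          Finset.mem_range] at hp
        refine ⟨r + d * t, ?_, ?_⟩
        · simp only [Finset.mem_coe, Finset.mem_filter, Finset.mem_range]
          constructor
          · calc r + d * t < d + d * t := by omega
              _ = d * (t + 1) := by ring
              _ ≤ d * g := Nat.mul_le_mul_left d (by omega)
              _ = N := by rw [mul_comm]; exact hgd
          · intro hdvd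
            exact hp.1.2 ((Nat.dvd_add_right (Dvd.dvd.mul_right h3d t)).1
              (by rwa [add_comm] at hdvd))
        · simp only [Prod.mk.injEq]
          constructor
          · rw [Nat.add_mul_mod_self_left, Nat.mod_eq_of_lt hp.1.1]
          · rw [Nat.add_mul_div_left _ _ hd0, Nat.div_eq_of_lt hp.1.1, zero_add]
      · intro m _
        rw [hmod m]
    rw [hstep, Finset.prod_product]
    simp only [Finset.prod_const, Finset.card_range]
    have : ∀ r : ℕ, ((1 - ω ^ r) ^ 2) ^ g = (1 - ω ^ r) ^ (2 * g) := fun r => by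
      rw [pow_mul]
    simp only [this]
    rw [Finset.prod_pow, prod_one_sub_not_dvd h3d hd0 hω, pow_mul]
    norm_num
  · rw [if_neg h3d]
    have hdN : d ∣ N := Nat.div_dvd_of_dvd hg
    have h3N : (3:ℕ) ∣ N := ⟨n + 1, rfl⟩
    have hdltN : d < N := by
      rcases lt_or_eq_of_le (Nat.le_of_dvd hN hdN) with h | h
      · exact h
      · exact absurd (h ▸ h3N) h3d
    refine Finset.prod_eq_zero (Finset.mem_filter.2 ⟨Finset.mem_range.2 hdltN, h3d⟩) ?_
    rw [hjd, sub_self]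
    norm_num

lemma borweinM_sum_filter (n b : ℕ) (hb : b < 3 * (n + 1)) :
    (borweinM 3 2 n b : ℂ) =
      ∑ i ∈ (Finset.range (6 * (n + 1) ^ 2 + 1)).filter
        (fun i => (3 * (n + 1)) ∣ i + (3 * (n + 1) - b)), (borweinCoeff 3 2 n i : ℂ) := by
  set N := 3 * (n + 1) with hNdef
  set D := 6 * (n + 1) ^ 2 with hDdef
  have hN : 0 < N := by omega
  rw [borweinM, borweinDeg_eq]
  push_cast
  rw [show (3 : ℕ) * (n + 1) = N from rfl]
  -- drop the zero terms
  rw [← Finset.sum_filter_add_sum_filter_not (Finset.range (D + 1)) (fun l => b + l * N ≤ D)]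
  have hzero : ∑ l ∈ (Finset.range (D+1)).filter (fun l => ¬ (b + l * N ≤ D)),
      ((borweinCoeff 3 2 n (b + l * N) : ℤ) : ℂ) = 0 := by
    refine Finset.sum_eq_zero fun l hl => ?_
    simp only [Finset.mem_filter] at hl
    rw [borweinCoeff_eq_zero n _ (by omega)]
    norm_num
  rw [hzero, add_zero]
  refine Finset.sum_nbij (fun l => b + l * N) ?_ ?_ ?_ ?_
  · intro l hl
    simp only [Finset.mem_filter, Finset.mem_range] at hl ⊢
    refine ⟨by omega, ?_⟩
    have harith : b + l * N + (N - b) = l * N + N := by omega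
    rw [harith]
    exact ⟨l + 1, by ring⟩
  · intro l₁ h₁ l₂ h₂ he
    simp only at he
    have : l₁ * N = l₂ * N := by omega
    exact Nat.eq_of_mul_eq_mul_right hN this
  · intro i hi
    simp only [Finset.coe_filter, Finset.mem_range, Set.mem_setOf_eq] at hi
    obtain ⟨hiD, hdvd⟩ := hi
    obtain ⟨c, hc⟩ := hdvd
    rcases c with _ | c'
    · omega
    · have hNc : N * (c' + 1) = c' * N + N := by ring
      rw [hNc] at hc
      have hi_eq : i = b + c' * N := by omega
      have hle : c' ≤ c' * N := Nat.le_mul_of_pos_right c' hN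
      refine ⟨c', ?_, hi_eq.symm⟩
      simp only [Finset.mem_coe, Finset.mem_filter, Finset.mem_range]
      omega
  · intro l _
    rfl

lemma dft_identity (n b : ℕ) (hb : b < 3 * (n + 1)) {ζ : ℂ}
    (hζ : IsPrimitiveRoot ζ (3 * (n + 1))) :
    ((3 * (n + 1) : ℕ) : ℂ) * (borweinM 3 2 n b : ℂ) =
      ∑ j ∈ Finset.range (3 * (n + 1)),
        (Polynomial.aeval (ζ ^ j)) (borweinPoly 3 2 n) * ζ ^ (j * (3 * (n + 1) - b)) := by
  set N := 3 * (n + 1) with hNdef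
  set D := 6 * (n + 1) ^ 2 with hDdef
  have hdeg : (borweinPoly 3 2 n).natDegree < D + 1 :=
    lt_of_le_of_lt (borweinPoly_natDegree_le_s5 n) (by omega)
  have heval : ∀ j : ℕ, (Polynomial.aeval (ζ ^ j)) (borweinPoly 3 2 n)
      = ∑ i ∈ Finset.range (D + 1), (borweinCoeff 3 2 n i : ℂ) * (ζ ^ j) ^ i := by
    intro j
    rw [Polynomial.aeval_def, Polynomial.eval₂_eq_sum_range' (algebraMap ℤ ℂ) hdeg]
    refine Finset.sum_congr rfl fun i _ => ?_
    rw [borweinCoeff]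
    norm_num
  calc ((N : ℕ) : ℂ) * (borweinM 3 2 n b : ℂ)
      = ∑ i ∈ (Finset.range (D + 1)).filter (fun i => N ∣ i + (N - b)),
          (borweinCoeff 3 2 n i : ℂ) * ((N : ℕ) : ℂ) := by
        rw [borweinM_sum_filter n b hb, Finset.mul_sum]
        exact Finset.sum_congr rfl fun i _ => mul_comm _ _
    _ = ∑ i ∈ Finset.range (D + 1), (borweinCoeff 3 2 n i : ℂ)
          * (if N ∣ i + (N - b) then ((N : ℕ) : ℂ) else 0) := by
        rw [Finset.sum_filter]
        exact Finset.sum_congr rfl fun i _ => by split <;> simp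
    _ = ∑ i ∈ Finset.range (D + 1), ∑ j ∈ Finset.range N,
          (borweinCoeff 3 2 n i : ℂ) * (ζ ^ j) ^ i * ζ ^ (j * (N - b)) := by
        refine Finset.sum_congr rfl fun i _ => ?_
        rw [← sum_pow_root hζ (i + (N - b)), Finset.mul_sum]
        refine Finset.sum_congr rfl fun j _ => ?_
        rw [← pow_mul, mul_assoc, ← pow_add, ← Nat.mul_add]
    _ = ∑ j ∈ Finset.range N, (Polynomial.aeval (ζ ^ j)) (borweinPoly 3 2 n)
          * ζ ^ (j * (N - b)) := by
        rw [Finset.sum_comm]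
        refine Finset.sum_congr rfl fun j _ => ?_
        rw [heval j, Finset.sum_mul]

lemma three_mul_lt_pow {M : ℕ} (hM : 2 ≤ M) : 3 * M < 3 ^ M := by
  induction M with
  | zero => omega
  | succ m ih =>
    rcases Nat.lt_or_ge m 2 with h | h
    · have hm1 : m = 1 := by omega
      subst hm1
      norm_num
    · have := ih h
      have h3 : 3 ^ m + 3 ≤ 3 ^ m + 3 ^ m := by
        have : 3 ≤ 3 ^ m := by calc 3 = 3 ^ 1 := rfl
                                    _ ≤ 3 ^ m := Nat.pow_le_pow_right (by norm_num) (by omega)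
        omega
      calc 3 * (m + 1) = 3 * m + 3 := by ring
        _ < 3 ^ m + 3 := by omega
        _ ≤ 3 ^ m + 3 ^ m + 3 ^ m := by omega
        _ = 3 ^ (m + 1) := by ring

lemma gcd_le_half {n j : ℕ} (hn : 1 ≤ n) (hj : j < 3 * (n + 1)) (hjM : j ≠ n + 1)
    (hj2M : j ≠ 2 * (n + 1)) (h3 : 3 ∣ (3 * (n + 1)) / Nat.gcd j (3 * (n + 1))) :
    2 * Nat.gcd j (3 * (n + 1)) ≤ n + 1 := by
  set N := 3 * (n + 1) with hNdef
  set g := Nat.gcd j N with hgdef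
  have hN : 0 < N := by omega
  have hg : g ∣ N := Nat.gcd_dvd_right j N
  have hgj : g ∣ j := Nat.gcd_dvd_left j N
  have hgd : g * (N / g) = N := Nat.mul_div_cancel' hg
  obtain ⟨c, hc⟩ := h3
  rw [hc] at hgd
  have hgc : g * c = n + 1 := by
    have h1 : 3 * (g * c) = N := by rw [← hgd]; ring
    omega
  rcases Nat.lt_or_ge c 2 with hcase | hcase
  · interval_cases c
    · omega
    · -- c = 1 : g = n + 1, so (n+1) ∣ j, j ∈ {0, n+1, 2(n+1)}, all excluded
      exfalso
      have hgM : g = n + 1 := by omega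
      have hMj : (n + 1) ∣ j := hgM ▸ hgj
      obtain ⟨k, hk⟩ := hMj
      have hk3 : k < 3 := by
        by_contra hk3
        push_neg at hk3
        have : (n + 1) * 3 ≤ (n + 1) * k := Nat.mul_le_mul_left _ hk3
        omega
      interval_cases k
      · -- j = 0, so g = N
        rw [hk, mul_zero] at hgdef
        rw [Nat.gcd_zero_left] at hgdef
        omega
      · exact hjM (by omega)
      · exact hj2M (by omega)
  · calc 2 * g ≤ c * g := Nat.mul_le_mul_right g hcase
      _ = n + 1 := by rw [mul_comm]; exact hgc

theorem stmt_5 (n b : ℕ) (hn : 1 ≤ n) (hb : b < 3 * (n + 1)) (hdvd : ¬ 3 ∣ b) :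
    borweinM 3 2 n b < 0 := by
  have hN0 : (3 * (n + 1)) ≠ 0 := by omega
  obtain ⟨ζ, hζ⟩ : ∃ ζ : ℂ, IsPrimitiveRoot ζ (3 * (n + 1)) :=
    ⟨_, Complex.isPrimitiveRoot_exp _ hN0⟩
  have habsζ : ‖ζ‖ = 1 := by
    exact Complex.norm_eq_one_of_pow_eq_one hζ.pow_eq_one hN0
  have habspow : ∀ k : ℕ, ‖ζ ^ k‖ = 1 := fun k => by
    rw [norm_pow, habsζ, one_pow]
  set F : ℕ → ℂ := fun j =>
    (Polynomial.aeval (ζ ^ j)) (borweinPoly 3 2 n) * ζ ^ (j * (3 * (n + 1) - b)) with hFdef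
  have hdft : ((3 * (n + 1) : ℕ) : ℂ) * (borweinM 3 2 n b : ℂ)
      = ∑ j ∈ Finset.range (3 * (n + 1)), F j := dft_identity n b hb hζ
  -- the two main terms
  have hgcdM : Nat.gcd (n + 1) (3 * (n + 1)) = n + 1 := Nat.gcd_eq_left ⟨3, by ring⟩
  have hNM : (3 * (n + 1)) / (n + 1) = 3 := by
    rw [mul_comm]; exact Nat.mul_div_cancel_left 3 (by omega)
  have hgcd2M : Nat.gcd (2 * (n + 1)) (3 * (n + 1)) = n + 1 := by
    rw [Nat.gcd_mul_right]
    norm_num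
  set w : ℂ := ζ ^ ((n + 1) * (3 * (n + 1) - b)) with hwdef
  have hw3 : w ^ 3 = 1 := by
    rw [hwdef, ← pow_mul,
      show (n + 1) * (3 * (n + 1) - b) * 3 = (3 * (n + 1)) * (3 * (n + 1) - b) by ring,
      pow_mul, hζ.pow_eq_one, one_pow]
  have hwne : w ≠ 1 := by
    intro h
    have hdv := (hζ.pow_eq_one_iff_dvd ((n + 1) * (3 * (n + 1) - b))).1 h
    obtain ⟨c, hc⟩ := hdv
    have h3 : 3 * (n + 1) - b = 3 * c := by
      have h1 : (n + 1) * (3 * (n + 1) - b) = (n + 1) * (3 * c) := by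
        rw [hc]; ring
      exact Nat.eq_of_mul_eq_mul_left (by omega) h1
    omega
  have hsum : w ^ 2 + w + 1 = 0 := by
    have hfac : (w - 1) * (w ^ 2 + w + 1) = w ^ 3 - 1 := by ring
    rw [hw3, sub_self] at hfac
    rcases mul_eq_zero.1 hfac with h | h
    · exact absurd (sub_eq_zero.1 h) hwne
    · exact h
  have hFM : F (n + 1) = 9 ^ (n + 1) * w := by
    rw [hFdef]
    simp only
    rw [aeval_borwein_root n hζ (n + 1), hgcdM, hNM, if_pos ⟨1, rfl⟩]
  have hF2M : F (2 * (n + 1)) = 9 ^ (n + 1) * w ^ 2 := by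
    rw [hFdef]
    simp only
    rw [aeval_borwein_root n hζ (2 * (n + 1)), hgcd2M, hNM, if_pos ⟨1, rfl⟩]
    congr 1
    rw [hwdef, ← pow_mul]
    congr 1
    ring
  have hmain : F (n + 1) + F (2 * (n + 1)) = -(9 : ℂ) ^ (n + 1) := by
    rw [hFM, hF2M, ← mul_add]
    have : w + w ^ 2 = -1 := by linear_combination hsum
    rw [this]
    ring
  -- split the sum
  have hMmem : (n + 1) ∈ Finset.range (3 * (n + 1)) := Finset.mem_range.2 (by omega)
  have h2Mmem : 2 * (n + 1) ∈ (Finset.range (3 * (n + 1))).erase (n + 1) :=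
    Finset.mem_erase.2 ⟨by omega, Finset.mem_range.2 (by omega)⟩
  set S := ((Finset.range (3 * (n + 1))).erase (n + 1)).erase (2 * (n + 1)) with hSdef
  have hsplit : ∑ j ∈ Finset.range (3 * (n + 1)), F j
      = F (n + 1) + (F (2 * (n + 1)) + ∑ j ∈ S, F j) := by
    rw [← Finset.add_sum_erase _ F hMmem, ← Finset.add_sum_erase _ F h2Mmem]
  -- bound the rest
  have hbound : ∀ j ∈ S, ‖F j‖ ≤ (3 : ℝ) ^ (n + 1) := by
    intro j hj
    rw [hSdef, Finset.mem_erase, Finset.mem_erase, Finset.mem_range] at hj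
    obtain ⟨hj2M, hjM, hjN⟩ := hj
    rw [hFdef]
    simp only
    rw [norm_mul, habspow, mul_one, aeval_borwein_root n hζ j]
    split_ifs with h3
    · rw [norm_pow]
      have h9 : ‖(9 : ℂ)‖ = 9 := by norm_num
      rw [h9]
      have h2g := gcd_le_half hn hjN hjM hj2M h3
      calc (9:ℝ) ^ (Nat.gcd j (3 * (n + 1))) = 3 ^ (2 * Nat.gcd j (3 * (n + 1))) := by
            rw [pow_mul]; norm_num
        _ ≤ 3 ^ (n + 1) := pow_le_pow_right₀ (by norm_num) h2g
    · simp only [norm_zero]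
      positivity
  have hR : ‖∑ j ∈ S, F j‖ ≤ ((3 * (n + 1) : ℕ) : ℝ) * 3 ^ (n + 1) := by
    refine le_trans (norm_sum_le S F) ?_
    refine le_trans (Finset.sum_le_sum hbound) ?_
    rw [Finset.sum_const, nsmul_eq_mul]
    have hcard : (S.card : ℝ) ≤ ((3 * (n + 1) : ℕ) : ℝ) := by
      have h1 : S.card ≤ 3 * (n + 1) := by
        calc S.card ≤ ((Finset.range (3 * (n + 1))).erase (n + 1)).card :=
              Finset.card_erase_le
          _ ≤ (Finset.range (3 * (n + 1))).card := Finset.card_erase_le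
          _ = 3 * (n + 1) := Finset.card_range _
      exact_mod_cast h1
    exact mul_le_mul_of_nonneg_right hcard (by positivity)
  -- put together
  have hkey : ((3 * (n + 1) : ℕ) : ℂ) * (borweinM 3 2 n b : ℂ)
      = -(9 : ℂ) ^ (n + 1) + ∑ j ∈ S, F j := by
    rw [hdft, hsplit, ← add_assoc, hmain]
  have h9c : (((9 : ℝ) ^ (n + 1) : ℝ) : ℂ) = (9 : ℂ) ^ (n + 1) := by push_cast; ring
  have hre : ((3 * (n + 1) : ℕ) : ℝ) * (borweinM 3 2 n b : ℝ)
      = -(9 : ℝ) ^ (n + 1) + (∑ j ∈ S, F j).re := by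
    have h := congrArg Complex.re hkey
    rw [← h9c, Complex.add_re, Complex.neg_re, Complex.ofReal_re] at h
    rw [← h]
    simp [Complex.mul_re]
  have hlt : ((3 * (n + 1) : ℕ) : ℝ) * (borweinM 3 2 n b : ℝ) < 0 := by
    rw [hre]
    have h1 : (∑ j ∈ S, F j).re ≤ ((3 * (n + 1) : ℕ) : ℝ) * 3 ^ (n + 1) :=
      le_trans (Complex.re_le_norm _) hR
    have h2 : ((3 * (n + 1) : ℕ) : ℝ) * 3 ^ (n + 1) < 9 ^ (n + 1) := by
      have hnat : 3 * (n + 1) < 3 ^ (n + 1) := three_mul_lt_pow (by omega)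
      have hcast : ((3 * (n + 1) : ℕ) : ℝ) < 3 ^ (n + 1) := by
        calc ((3 * (n + 1) : ℕ) : ℝ) < ((3 ^ (n + 1) : ℕ) : ℝ) := by exact_mod_cast hnat
          _ = 3 ^ (n + 1) := by push_cast; ring
      calc ((3 * (n + 1) : ℕ) : ℝ) * 3 ^ (n + 1) < 3 ^ (n + 1) * 3 ^ (n + 1) :=
            mul_lt_mul_of_pos_right hcast (by positivity)
        _ = 9 ^ (n + 1) := by rw [← mul_pow]; norm_num
    linarith
  by_contra hcon
  push_neg at hcon
  have hge : (0 : ℝ) ≤ ((3 * (n + 1) : ℕ) : ℝ) * (borweinM 3 2 n b : ℝ) := by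
    apply mul_nonneg (by positivity)
    exact_mod_cast hcon
  linarith
end
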